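/- Let S ⊆ (0, 1] be such that S ∪ {0} is compact in ℝ. For each n ≥ 1 let r_n ∈ C₀(S, ℂ) be r_n(t) = t^{1/(2n+1)}, and let χ : S → ℂ be the constant function 1. Then for every bounded linear functional ψ on the space of bounded functions on S that restricts on C₀(S) to a multiplicative functional with ψ(r_n) ∈ [0,1] for all n and lim_n ψ(r_n) = 1, and for every linear contraction Φ from span(C₀(S) ∪ {χ}) ⊆ ℓ^∞(S) into a Banach space V extending the inclusion of C₀(S) isometrically, any functional ρ ∈ V* of norm at most 1 with ρ(Φ(g)) = ψ(g) for g ∈ C₀(S) satisfies ρ(Φ(χ)) = 1. -/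

import Mathlib

open Filter BoundedContinuousFunction

/-- Lemma 2 of the paper (key computation). Let `S ⊆ (0,1]` with `S ∪ {0}`
compact, `r_n(t) = t^{1/(2n+1)}` the odd roots and `χ` the constant `1`
function inside `ℓ^∞(S)` (bounded functions on `S`, realized here as bounded
continuous functions since all the relevant functions are continuous). Let `ψ`
be a bounded functional on `ℓ^∞(S)` which is multiplicative on `C₀(S)` (the
functions vanishing at infinity of `S`) with `ψ(r_n) ∈ [0,1]` and
`ψ(r_n) → 1`. Let `Φ` be a linear contraction from the span `W` of
`C₀(S) ∪ {χ}` into a Banach space `V` which is isometric on `C₀(S)`, and let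
`ρ ∈ V*` with `‖ρ‖ ≤ 1` and `ρ(Φ g) = ψ(g)` for `g ∈ C₀(S)`.
Then `ρ(Φ χ) = 1`. -/
theorem stmt_17 (S : Set ℝ) (hS : S ⊆ Set.Ioc 0 1) (hScpt : IsCompact (S ∪ {0}))
    (r : ℕ → (↥S →ᵇ ℂ))
    (hr : ∀ (n : ℕ) (x : ↥S),
      r n x = (((x : ℝ) ^ ((1 : ℝ) / (2 * (n : ℝ) + 1)) : ℝ) : ℂ))
    (hrC0 : ∀ n, Tendsto (fun x : ↥S => r n x) (cocompact ↥S) (nhds 0))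
    (χ : ↥S →ᵇ ℂ) (hχ : ∀ x : ↥S, χ x = 1)
    {V : Type*} [NormedAddCommGroup V] [NormedSpace ℂ V] [CompleteSpace V]
    (W : Submodule ℂ (↥S →ᵇ ℂ))
    (hC0W : ∀ g : ↥S →ᵇ ℂ,
      Tendsto (fun x : ↥S => g x) (cocompact ↥S) (nhds 0) → g ∈ W)
    (hχW : χ ∈ W)
    (hWspan : ∀ w ∈ W, ∃ (g : ↥S →ᵇ ℂ) (c : ℂ),
      Tendsto (fun x : ↥S => g x) (cocompact ↥S) (nhds 0) ∧ w = g + c • χ)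
    (ψ : (↥S →ᵇ ℂ) →L[ℂ] ℂ)
    (hψmul : ∀ g₁ g₂ : ↥S →ᵇ ℂ,
      Tendsto (fun x : ↥S => g₁ x) (cocompact ↥S) (nhds 0) →
      Tendsto (fun x : ↥S => g₂ x) (cocompact ↥S) (nhds 0) →
      ψ (g₁ * g₂) = ψ g₁ * ψ g₂)
    (hψr : ∀ n, ∃ t : ℝ, t ∈ Set.Icc (0 : ℝ) 1 ∧ ψ (r n) = (t : ℂ))
    (hψlim : Tendsto (fun n => ψ (r n)) atTop (nhds 1))
    (Φ : W →ₗ[ℂ] V)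
    (hΦcontr : ∀ w : W, ‖Φ w‖ ≤ ‖(w : ↥S →ᵇ ℂ)‖)
    (hΦiso : ∀ (g : ↥S →ᵇ ℂ)
      (hg : Tendsto (fun x : ↥S => g x) (cocompact ↥S) (nhds 0)),
      ‖Φ ⟨g, hC0W g hg⟩‖ = ‖g‖)
    (ρ : V →L[ℂ] ℂ) (hρ : ‖ρ‖ ≤ 1)
    (hcomp : ∀ (g : ↥S →ᵇ ℂ)
      (hg : Tendsto (fun x : ↥S => g x) (cocompact ↥S) (nhds 0)),
      ρ (Φ ⟨g, hC0W g hg⟩) = ψ g) :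
    ρ (Φ ⟨χ, hχW⟩) = 1 := by
  set z : ℂ := ρ (Φ ⟨χ, hχW⟩) with hz
  -- χ has norm ≤ 1
  have hχnorm : ‖χ‖ ≤ 1 := by
    apply BoundedContinuousFunction.norm_le (by norm_num) |>.2
    intro x; rw [hχ x]; simp
  -- |z| ≤ 1
  have hz1 : ‖z‖ ≤ 1 := by
    calc ‖z‖ ≤ ‖ρ‖ * ‖Φ ⟨χ, hχW⟩‖ := ρ.le_opNorm _
    _ ≤ 1 * ‖((⟨χ, hχW⟩ : W) : ↥S →ᵇ ℂ)‖ := by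
        apply mul_le_mul hρ (hΦcontr _) (norm_nonneg _) (by norm_num)
    _ ≤ 1 := by simpa using hχnorm
  -- key estimate
  have key : ∀ n : ℕ, ‖z - 2 * ψ (r n)‖ ≤ 1 := by
    intro n
    set w : W := ⟨χ, hχW⟩ - (2 : ℂ) • ⟨r n, hC0W _ (hrC0 n)⟩ with hw
    have hnormw : ‖(w : ↥S →ᵇ ℂ)‖ ≤ 1 := by
      apply BoundedContinuousFunction.norm_le (by norm_num) |>.2
      intro x
      have hx := hS x.2
      have hp : (0:ℝ) ≤ (1 : ℝ) / (2 * (n : ℝ) + 1) := by positivity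
      have h0 : (0:ℝ) ≤ ((x : ℝ) ^ ((1 : ℝ) / (2 * (n : ℝ) + 1)) : ℝ) :=
        Real.rpow_nonneg hx.1.le _
      have h1 : ((x : ℝ) ^ ((1 : ℝ) / (2 * (n : ℝ) + 1)) : ℝ) ≤ 1 :=
        Real.rpow_le_one hx.1.le hx.2 hp
      have : (w : ↥S →ᵇ ℂ) x = χ x - 2 * r n x := by
        simp [hw]
      rw [this, hχ x, hr n x]
      rw [show (1 : ℂ) - 2 * (((x : ℝ) ^ ((1 : ℝ) / (2 * (n : ℝ) + 1)) : ℝ) : ℂ)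
          = (((1 - 2 * ((x : ℝ) ^ ((1 : ℝ) / (2 * (n : ℝ) + 1)))) : ℝ) : ℂ) by
        push_cast; ring]
      rw [Complex.norm_real, Real.norm_eq_abs, abs_le]
      constructor <;> nlinarith
    have hρw : ρ (Φ w) = z - 2 * ψ (r n) := by
      rw [hw]
      simp only [map_sub, map_smul]
      rw [hcomp (r n) (hrC0 n), smul_eq_mul, ← hz]
    calc ‖z - 2 * ψ (r n)‖ = ‖ρ (Φ w)‖ := by rw [hρw]
    _ ≤ ‖ρ‖ * ‖Φ w‖ := ρ.le_opNorm _
    _ ≤ 1 * ‖(w : ↥S →ᵇ ℂ)‖ :=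
        mul_le_mul hρ (hΦcontr _) (norm_nonneg _) (by norm_num)
    _ ≤ 1 := by simpa using hnormw
  -- take limit
  have hlim : Tendsto (fun n => z - 2 * ψ (r n)) atTop (nhds (z - 2)) := by
    have := hψlim.const_mul (2 : ℂ)
    simpa using (tendsto_const_nhds (x := z)).sub this
  have hz2 : ‖z - 2‖ ≤ 1 :=
    le_of_tendsto (hlim.norm) (Filter.Eventually.of_forall key)
  -- conclude z = 1
  have h1 : z.re ^ 2 + z.im ^ 2 ≤ 1 := by
    have := Complex.sq_norm z
    rw [Complex.normSq_apply] at this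
    nlinarith [norm_nonneg z]
  have h2 : (z.re - 2) ^ 2 + z.im ^ 2 ≤ 1 := by
    have := Complex.sq_norm (z - 2)
    rw [Complex.normSq_apply] at this
    norm_num [Complex.sub_re, Complex.sub_im] at this
    nlinarith [norm_nonneg (z - 2)]
  have hre : z.re = 1 :=
    le_antisymm (by nlinarith [sq_nonneg z.im]) (by nlinarith [sq_nonneg (z.re - 1), sq_nonneg z.im])
  have him : z.im = 0 := by
    have h3 : z.im ^ 2 = 0 := le_antisymm (by nlinarith) (sq_nonneg _)
    exact pow_eq_zero_iff (two_ne_zero) |>.1 h3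
  exact Complex.ext hre (by simpa using him)
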